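/- Assume the Krull dimension of A is strictly greater than 1. Then A' = A if and only if A satisfies (S₂), i.e. if and only if depth(A_p) ≥ min(2, ht(p)) for every prime ideal p of A. -/

import Mathlib

/-!
`A` is a Noetherian integral domain with fraction field `K = FractionRing A`.
`A'` is the intersection, inside `K`, of the localizations `A_p` at all height-one
primes `p` of `A`; membership in `A'` is expressed by the predicate `MemHtOneLoc`.
The depth of a Noetherian local ring is the maximal length of a regular sequence in
its maximal ideal; Serre's condition `(S₂)` (`depth(A_p) ≥ min(2, ht p)` for all
primes `p`) is expressed by `SerreS2`, using the maximal ideal `p·A_p` of the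
localization `A_p` and explicit chains of primes to express heights.
-/

/-- `P` is a prime ideal of height one: it is prime, there is a chain `q < P` of primes
below it, but no chain `q₁ < q₂ < P` of primes below it. -/
def HeightOneIdeal {S : Type*} [CommRing S] (P : Ideal S) : Prop :=
  P.IsPrime ∧ (∃ q : Ideal S, q.IsPrime ∧ q < P) ∧
    ¬ ∃ q₁ q₂ : Ideal S, q₁.IsPrime ∧ q₂.IsPrime ∧ q₁ < q₂ ∧ q₂ < P

/-- `x ∈ A_p ⊆ K` for every height-one prime `p` of `A`, i.e. `x ∈ A'`. -/
def MemHtOneLoc (A : Type*) [CommRing A] (K : Type*) [CommRing K] [Algebra A K]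
    (x : K) : Prop :=
  ∀ p : Ideal A, HeightOneIdeal p →
    ∃ a s : A, s ∉ p ∧ x * algebraMap A K s = algebraMap A K a

/-- `r` is a regular sequence on `S` contained in the ideal `I`: each `r i` lies in `I`
and is a nonzerodivisor modulo the ideal generated by the previous terms. -/
def IsRegSeq {S : Type*} [CommRing S] (I : Ideal S) {d : ℕ} (r : Fin d → S) : Prop :=
  (∀ i, r i ∈ I) ∧ ∀ (i : Fin d) (x : S),
    r i * x ∈ Ideal.span {y : S | ∃ j : Fin d, j < i ∧ y = r j} →
    x ∈ Ideal.span {y : S | ∃ j : Fin d, j < i ∧ y = r j}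

/-- Serre's condition `(S₂)`: for every prime `p` of `A`, the depth of the local ring
`A_p` is at least `min(2, ht p)`; heights are expressed by chains of primes and depth
by the existence of regular sequences in the maximal ideal `p·A_p` of `A_p`. -/
def SerreS2 (A : Type*) [CommRing A] : Prop :=
  ∀ (p : Ideal A) (hp : p.IsPrime),
    ((∃ q : Ideal A, q.IsPrime ∧ q < p) →
      ∃ r : Fin 1 → Localization (@Ideal.primeCompl A _ p hp),
        IsRegSeq (p.map (algebraMap A (Localization (@Ideal.primeCompl A _ p hp)))) r) ∧
    ((∃ q₁ q₂ : Ideal A, q₁.IsPrime ∧ q₂.IsPrime ∧ q₁ < q₂ ∧ q₂ < p) →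
      ∃ r : Fin 2 → Localization (@Ideal.primeCompl A _ p hp),
        IsRegSeq (p.map (algebraMap A (Localization (@Ideal.primeCompl A _ p hp)))) r)

section AuxAss

open Submodule

/-- An element whose singleton-span has prime annihilator is nonzero. -/
lemma prime_ann_ne_zero {R M : Type*} [CommRing R] [AddCommGroup M] [Module R M]
    {P : Ideal R} (hP : P.IsPrime) {z : M} (h : P = (span R {z}).annihilator) : z ≠ 0 := by
  rintro rfl
  exact hP.ne_top (by rw [h, span_zero_singleton, annihilator_bot])

/-- Bridge between the radical-colon definition of associated primes and annihilators. -/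
lemma isAss_iff_ann {R M : Type*} [CommRing R] [AddCommGroup M] [Module R M]
    [IsNoetherianRing R] {P : Ideal R} :
    IsAssociatedPrime P M ↔ P.IsPrime ∧ ∃ x : M, P = (span R {x}).annihilator := by
  rw [isAssociatedPrime_iff]
  have : ∀ x : M, (⊥ : Submodule R M).colon {x} = (span R {x}).annihilator := fun x => by
    ext r; rw [Submodule.mem_colon_singleton, mem_bot, mem_annihilator_span_singleton]
  simp only [this]

/-- An associated prime of `M` is an associated prime of a submodule `N` or of `M ⧸ N`. -/
lemma assPrime_sub_or_quot {R M : Type*} [CommRing R] [AddCommGroup M] [Module R M]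
    [IsNoetherianRing R]
    (N : Submodule R M) {P : Ideal R} (hP : IsAssociatedPrime P M) :
    IsAssociatedPrime P N ∨ IsAssociatedPrime P (M ⧸ N) := by
  obtain ⟨hPp, m, hm⟩ := isAss_iff_ann.mp hP
  by_cases h : span R {m} ⊓ N = ⊥
  · right
    refine isAss_iff_ann.mpr ⟨hPp, Submodule.Quotient.mk m, le_antisymm ?_ ?_⟩ <;> intro t ht
    · rw [mem_annihilator_span_singleton, ← Submodule.Quotient.mk_smul,
        Submodule.Quotient.mk_eq_zero]
      have : t • m = 0 := by
        have := hm ▸ ht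
        rwa [mem_annihilator_span_singleton] at this
      rw [this]; exact N.zero_mem
    · rw [mem_annihilator_span_singleton, ← Submodule.Quotient.mk_smul,
        Submodule.Quotient.mk_eq_zero] at ht
      have h1 : t • m ∈ span R {m} ⊓ N :=
        ⟨smul_mem _ t (mem_span_singleton_self m), ht⟩
      rw [h] at h1
      rw [hm, mem_annihilator_span_singleton]
      exact h1
  · left
    obtain ⟨n, hn, hn0⟩ := Submodule.exists_mem_ne_zero_of_ne_bot h
    obtain ⟨hn1, hn2⟩ := hn
    obtain ⟨t, ht⟩ := mem_span_singleton.mp hn1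
    refine isAss_iff_ann.mpr ⟨hPp, ⟨n, hn2⟩, le_antisymm ?_ ?_⟩ <;> intro s hs
    · rw [mem_annihilator_span_singleton]
      have hsm : s • m = 0 := by
        have := hm ▸ hs; rwa [mem_annihilator_span_singleton] at this
      have : s • (⟨n, hn2⟩ : N) = ⟨s • n, N.smul_mem s hn2⟩ := rfl
      rw [this]
      have : s • n = 0 := by rw [← ht, smul_comm, hsm, smul_zero]
      simp [this]
    · rw [mem_annihilator_span_singleton] at hs
      have hsn : s • n = 0 := by
        have := congrArg (Subtype.val) hs
        simpa using this
      have hst : (s * t) • m = 0 := by rw [mul_smul, ht, hsn]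
      have : s * t ∈ P := by rw [hm, mem_annihilator_span_singleton]; exact hst
      rcases hPp.mem_or_mem this with h' | h'
      · exact h'
      · exfalso
        apply hn0
        rw [← ht]
        have : t • m = 0 := by
          have := hm ▸ h'; rwa [mem_annihilator_span_singleton] at this
        exact this

/-- The only associated prime of a cyclic module with prime annihilator is that prime. -/
lemma ass_span_singleton_eq {R M : Type*} [CommRing R] [AddCommGroup M] [Module R M]
    [IsNoetherianRing R]
    {y : M} {P : Ideal R} (hPp : P.IsPrime) (hann : P = (span R {y}).annihilator)
    {Q : Ideal R} (hQ : IsAssociatedPrime Q (span R {y})) : Q = P := by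
  obtain ⟨hQp, z, hz⟩ := isAss_iff_ann.mp hQ
  have hz0 : z ≠ 0 := prime_ann_ne_zero hQp hz
  obtain ⟨t, ht⟩ := mem_span_singleton.mp z.2
  have hty : t • y = (z : M) := ht
  have htP : t ∉ P := by
    intro h
    apply hz0
    have : t • y = 0 := by
      have := hann ▸ h; rwa [mem_annihilator_span_singleton] at this
    ext
    rw [← hty, this]; rfl
  ext s
  rw [hz, mem_annihilator_span_singleton]
  constructor
  · intro hs
    have : s • (z : M) = 0 := by
      have := congrArg (Subtype.val) hs
      simpa using this
    have hst : (s * t) • y = 0 := by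
      rw [mul_smul, hty]
      exact_mod_cast this
    have : s * t ∈ P := by rw [hann, mem_annihilator_span_singleton]; exact hst
    rcases hPp.mem_or_mem this with h' | h'
    · exact h'
    · exact absurd h' htP
  · intro hs
    have hsy : s • y = 0 := by
      have := hann ▸ hs; rwa [mem_annihilator_span_singleton] at this
    ext
    show s • (z : M) = 0
    rw [← hty, smul_comm, hsy, smul_zero]

/-- Finiteness of the set of associated primes of quotients of a Noetherian module. -/
lemma ass_finite_quot {R M : Type*} [CommRing R] [AddCommGroup M] [Module R M]
    [IsNoetherianRing R] [IsNoetherian R M] (N : Submodule R M) :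
    (associatedPrimes R (M ⧸ N)).Finite := by
  induction N using IsNoetherian.induction with
  | _ N IH =>
  by_cases hN : N = ⊤
  · haveI : Subsingleton (M ⧸ N) := Submodule.Quotient.subsingleton_iff.mpr hN
    rw [associatedPrimes.eq_empty_of_subsingleton]
    exact Set.finite_empty
  · haveI := Submodule.Quotient.nontrivial_iff.mpr hN
    obtain ⟨P, hP⟩ := associatedPrimes.nonempty R (M ⧸ N)
    obtain ⟨hPp, ybar, hann⟩ := (isAss_iff_ann (M := M ⧸ N) (P := P)).mp hP
    obtain ⟨y, rfl⟩ := Submodule.Quotient.mk_surjective N ybar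
    have hy0 : Submodule.Quotient.mk (p := N) y ≠ 0 := prime_ann_ne_zero hPp hann
    have hy : y ∉ N := fun h => hy0 ((Submodule.Quotient.mk_eq_zero N).mpr h)
    set N' := N ⊔ span R {y} with hN'
    have hlt : N < N' := by
      refine lt_of_le_of_ne le_sup_left (fun h => hy ?_)
      rw [h]
      exact Submodule.mem_sup_right (mem_span_singleton_self y)
    have hfin' := IH N' hlt
    have hmapN : Submodule.map N.mkQ N = ⊥ := by
      rw [eq_bot_iff]
      rintro z ⟨w, hw, rfl⟩
      simp only [Submodule.mem_bot, Submodule.mkQ_apply, Submodule.Quotient.mk_eq_zero]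
      exact hw
    have hmap : Submodule.map N.mkQ N' = span R {Submodule.Quotient.mk (p := N) y} := by
      rw [hN', Submodule.map_sup, hmapN, Submodule.map_span, Set.image_singleton, bot_sup_eq]
      rfl
    apply Set.Finite.subset (hfin'.union (Set.finite_singleton P))
    intro Q hQ
    rcases assPrime_sub_or_quot (span R {Submodule.Quotient.mk (p := N) y}) hQ with h | h
    · exact Or.inr (ass_span_singleton_eq hPp hann h)
    · left
      have e := Submodule.quotientQuotientEquivQuotient N N' le_sup_left
      rw [hmap] at e
      exact (LinearEquiv.AssociatedPrimes.eq e) ▸ h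

/-- A Noetherian module over a Noetherian ring has finitely many associated primes. -/
lemma ass_finite {R M : Type*} [CommRing R] [AddCommGroup M] [Module R M]
    [IsNoetherianRing R] [IsNoetherian R M] : (associatedPrimes R M).Finite := by
  have h := ass_finite_quot (R := R) (M := M) ⊥
  rwa [LinearEquiv.AssociatedPrimes.eq (Submodule.quotEquivOfEqBot (⊥ : Submodule R M) rfl)]
    at h

/-- If every element of an ideal `I` is a zerodivisor on a Noetherian module `M`, then
some nonzero element of `M` is annihilated by all of `I` (prime avoidance). -/
lemma exists_ann_of_zd {R M : Type*} [CommRing R] [AddCommGroup M] [Module R M]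
    [IsNoetherianRing R] [IsNoetherian R M] (I : Ideal R)
    (hI : ∀ r ∈ I, ∃ x : M, x ≠ 0 ∧ r • x = 0) :
    ∃ z : M, z ≠ 0 ∧ ∀ r ∈ I, r • z = 0 := by
  have hfin : (associatedPrimes R M).Finite := ass_finite
  have hsub : (I : Set R) ⊆ ⋃ p ∈ hfin.toFinset, ((p : Ideal R) : Set R) := by
    intro r hr
    have h2 := biUnion_associatedPrimes_eq_zero_divisors R M
    have : r ∈ ⋃ p ∈ associatedPrimes R M, ((p : Ideal R) : Set R) := by
      rw [h2]; exact hI r hr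
    simpa [Set.Finite.mem_toFinset] using this
  rw [show ((⋃ p ∈ hfin.toFinset, ((p : Ideal R) : Set R)) =
      ⋃ p ∈ (hfin.toFinset : Set (Ideal R)), ((p : Ideal R) : Set R)) by simp] at hsub
  rw [Ideal.subset_union_prime ⊥ ⊥ (fun P hP _ _ => (hfin.mem_toFinset.mp hP).isPrime)] at hsub
  obtain ⟨P, hPmem, hIP⟩ := hsub
  obtain ⟨hPp, z, hann⟩ := isAss_iff_ann.mp (hfin.mem_toFinset.mp hPmem)
  refine ⟨z, prime_ann_ne_zero hPp hann, fun r hr => ?_⟩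
  have := hann ▸ hIP hr
  rwa [mem_annihilator_span_singleton] at this

/-- Ring-theoretic version: if every element of `I` is a zerodivisor mod `J`,
then some `c ∉ J` satisfies `I·c ⊆ J`. -/
lemma exists_colon_of_zd {R : Type*} [CommRing R] [IsNoetherianRing R] (I J : Ideal R)
    (hI : ∀ r ∈ I, ∃ x, x ∉ J ∧ r * x ∈ J) :
    ∃ c, c ∉ J ∧ ∀ r ∈ I, r * c ∈ J := by
  obtain ⟨z, hz0, hz⟩ := exists_ann_of_zd (M := R ⧸ (J : Submodule R R)) I (fun r hr => by
    obtain ⟨x, hx1, hx2⟩ := hI r hr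
    refine ⟨Submodule.Quotient.mk x, fun h => hx1 ((Submodule.Quotient.mk_eq_zero _).mp h), ?_⟩
    rw [← Submodule.Quotient.mk_smul, smul_eq_mul, Submodule.Quotient.mk_eq_zero]
    exact hx2)
  obtain ⟨c, rfl⟩ := Submodule.Quotient.mk_surjective _ z
  refine ⟨c, fun h => hz0 ((Submodule.Quotient.mk_eq_zero _).mpr h), fun r hr => ?_⟩
  have := hz r hr
  rwa [← Submodule.Quotient.mk_smul, smul_eq_mul, Submodule.Quotient.mk_eq_zero] at this

/-- A regular pair `r` in an ideal `I` with `I·c ⊆ (a)`, `a ≠ 0`, `c ∉ (a)` is impossible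
in a domain. -/
lemma regseq_contra {S : Type*} [CommRing S] [IsDomain S] {I : Ideal S} {r : Fin 2 → S}
    (hreg : IsRegSeq I r) {a c : S} (ha : a ≠ 0) (hc : c ∉ Ideal.span {a})
    (hIc : ∀ y ∈ I, y * c ∈ Ideal.span {a}) : False := by
  have hS0 : {y : S | ∃ j : Fin 2, j < (0 : Fin 2) ∧ y = r j} = ∅ := by
    ext y
    simp only [Set.mem_setOf_eq, Set.mem_empty_iff_false, iff_false]
    rintro ⟨j, hj, -⟩
    have := Fin.lt_def.mp hj
    omega
  have hS1 : {y : S | ∃ j : Fin 2, j < (1 : Fin 2) ∧ y = r j} = {r 0} := by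
    ext y
    simp only [Set.mem_setOf_eq, Set.mem_singleton_iff]
    constructor
    · rintro ⟨j, hj, rfl⟩
      have hj1 := Fin.lt_def.mp hj
      have : j = 0 := Fin.ext (by omega)
      rw [this]
    · rintro rfl
      exact ⟨0, by decide, rfl⟩
  obtain ⟨d₀, h₀⟩ := Ideal.mem_span_singleton.mp (hIc _ (hreg.1 0))
  obtain ⟨d₁, h₁⟩ := Ideal.mem_span_singleton.mp (hIc _ (hreg.1 1))
  have key : a * (r 1 * d₀) = a * (r 0 * d₁) := by linear_combination r 0 * h₁ - r 1 * h₀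
  have h2 : r 1 * d₀ = r 0 * d₁ := mul_left_cancel₀ ha key
  have hd₀ : d₀ ∈ Ideal.span {y : S | ∃ j : Fin 2, j < (1 : Fin 2) ∧ y = r j} := by
    apply hreg.2 1 d₀
    rw [hS1, h2, Ideal.mem_span_singleton]
    exact dvd_mul_right _ _
  rw [hS1, Ideal.mem_span_singleton] at hd₀
  obtain ⟨e, he⟩ := hd₀
  have hce : c - a * e ∈ Ideal.span {y : S | ∃ j : Fin 2, j < (0 : Fin 2) ∧ y = r j} := by
    apply hreg.2 0 (c - a * e)
    rw [hS0, Ideal.span_empty, Ideal.mem_bot]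
    linear_combination h₀ + a * he
  rw [hS0, Ideal.span_empty, Ideal.mem_bot, sub_eq_zero] at hce
  exact hc (Ideal.mem_span_singleton.mpr ⟨e, hce⟩)

end AuxAss

/-- If `dim A > 1`, then `A' = A` if and only if `A` satisfies
Serre's condition `(S₂)`. -/
theorem statement10 (A : Type) [CommRing A] [IsDomain A] [IsNoetherianRing A]
    (hdim : 1 < ringKrullDim A) :
    (∀ x : FractionRing A, MemHtOneLoc A (FractionRing A) x →
      ∃ a : A, x = algebraMap A (FractionRing A) a) ↔ SerreS2 A := by
  classical
  have ginj : Function.Injective (algebraMap A (FractionRing A)) :=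
    IsFractionRing.injective A (FractionRing A)
  constructor
  · -- A' = A → (S₂)
    intro hA' p hp
    haveI := hp
    have hinj : Function.Injective (algebraMap A (Localization p.primeCompl)) :=
      IsLocalization.injective _ p.primeCompl_le_nonZeroDivisors
    constructor
    · rintro ⟨q, hq, hqp⟩
      have hpne : p ≠ ⊥ := fun h => not_lt_bot (h ▸ hqp)
      obtain ⟨b, hbp, hb0⟩ := Submodule.exists_mem_ne_zero_of_ne_bot hpne
      have hfb : algebraMap A (Localization p.primeCompl) b ≠ 0 :=
        fun h => hb0 (hinj (by rw [h, map_zero]))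
      refine ⟨fun _ => algebraMap A (Localization p.primeCompl) b,
        fun i => Ideal.mem_map_of_mem _ hbp, ?_⟩
      intro i x hxmem
      have hS : {y : Localization p.primeCompl |
          ∃ j : Fin 1, j < i ∧ y = (fun _ => algebraMap A (Localization p.primeCompl) b) j}
          = ∅ := by
        ext y
        simp only [Set.mem_setOf_eq, Set.mem_empty_iff_false, iff_false]
        rintro ⟨j, hj, -⟩
        have h1 := Fin.lt_def.mp hj
        have h2 := j.isLt
        have h3 := i.isLt
        omega
      rw [hS, Ideal.span_empty, Ideal.mem_bot] at hxmem ⊢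
      rcases mul_eq_zero.mp hxmem with h | h
      · exact absurd h hfb
      · exact h
    · rintro ⟨q1, q2, h1, h2, h12, h2p⟩
      have hpne : p ≠ ⊥ := fun h => not_lt_bot (h ▸ h2p)
      obtain ⟨b, hbp, hb0⟩ := Submodule.exists_mem_ne_zero_of_ne_bot hpne
      have hfb : algebraMap A (Localization p.primeCompl) b ≠ 0 :=
        fun h => hb0 (hinj (by rw [h, map_zero]))
      by_cases H : ∃ t ∈ Ideal.map (algebraMap A (Localization p.primeCompl)) p,
          ∀ x : Localization p.primeCompl,
          t * x ∈ Ideal.span {algebraMap A (Localization p.primeCompl) b} →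
          x ∈ Ideal.span {algebraMap A (Localization p.primeCompl) b}
      · obtain ⟨t, htm, ht⟩ := H
        refine ⟨![algebraMap A (Localization p.primeCompl) b, t], fun i => ?_, ?_⟩
        · fin_cases i
          · exact Ideal.mem_map_of_mem _ hbp
          · exact htm
        · intro i x hxmem
          fin_cases i
          · have hS : {y : Localization p.primeCompl | ∃ j : Fin 2, j < (0 : Fin 2) ∧
                y = ![algebraMap A (Localization p.primeCompl) b, t] j} = ∅ := by
              ext y
              simp only [Set.mem_setOf_eq, Set.mem_empty_iff_false, iff_false]
              rintro ⟨j, hj, -⟩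
              have := Fin.lt_def.mp hj
              omega
            have hxmem' : algebraMap A (Localization p.primeCompl) b * x ∈
                Ideal.span {y : Localization p.primeCompl | ∃ j : Fin 2, j < (0 : Fin 2) ∧
                y = ![algebraMap A (Localization p.primeCompl) b, t] j} := hxmem
            show x ∈ Ideal.span {y : Localization p.primeCompl | ∃ j : Fin 2, j < (0 : Fin 2) ∧
                y = ![algebraMap A (Localization p.primeCompl) b, t] j}
            rw [hS, Ideal.span_empty, Ideal.mem_bot] at hxmem' ⊢
            rcases mul_eq_zero.mp hxmem' with h | h
            · exact absurd h hfb
            · exact h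
          · have hS : {y : Localization p.primeCompl | ∃ j : Fin 2, j < (1 : Fin 2) ∧
                y = ![algebraMap A (Localization p.primeCompl) b, t] j} =
                {algebraMap A (Localization p.primeCompl) b} := by
              ext y
              simp only [Set.mem_setOf_eq, Set.mem_singleton_iff]
              constructor
              · rintro ⟨j, hj, rfl⟩
                have hj1 := Fin.lt_def.mp hj
                have : j = 0 := Fin.ext (by omega)
                rw [this]
                rfl
              · rintro rfl
                exact ⟨0, by decide, rfl⟩
            have hxmem' : t * x ∈
                Ideal.span {y : Localization p.primeCompl | ∃ j : Fin 2, j < (1 : Fin 2) ∧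
                y = ![algebraMap A (Localization p.primeCompl) b, t] j} := hxmem
            show x ∈ Ideal.span {y : Localization p.primeCompl | ∃ j : Fin 2, j < (1 : Fin 2) ∧
                y = ![algebraMap A (Localization p.primeCompl) b, t] j}
            rw [hS] at hxmem' ⊢
            exact ht x hxmem'
      · exfalso
        push_neg at H
        haveI : IsNoetherianRing (Localization p.primeCompl) :=
          IsLocalization.isNoetherianRing p.primeCompl _ ‹IsNoetherianRing A›
        obtain ⟨c', hc'J, hc'ann⟩ := exists_colon_of_zd
          (Ideal.map (algebraMap A (Localization p.primeCompl)) p)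
          (Ideal.span {algebraMap A (Localization p.primeCompl) b})
          (fun r hr => by
            obtain ⟨x, hx1, hx2⟩ := H r hr
            exact ⟨x, hx2, hx1⟩)
        obtain ⟨⟨c, s⟩, hcs⟩ := IsLocalization.surj p.primeCompl c'
        have hfc : algebraMap A (Localization p.primeCompl) c ∉
            Ideal.span {algebraMap A (Localization p.primeCompl) b} := by
          intro h
          apply hc'J
          rw [← hcs] at h
          obtain ⟨u, hu⟩ : IsUnit (algebraMap A (Localization p.primeCompl) (s : A)) :=
            IsLocalization.map_units _ s
          obtain ⟨d, hd⟩ := Ideal.mem_span_singleton.mp h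
          rw [Ideal.mem_span_singleton]
          refine ⟨d * ↑u⁻¹, ?_⟩
          have hcu : c' * ↑u = algebraMap A (Localization p.primeCompl) b * d := by
            rw [hu]; exact hd
          calc c' = c' * (↑u * ↑u⁻¹) := by rw [u.mul_inv, mul_one]
            _ = (c' * ↑u) * ↑u⁻¹ := by ring
            _ = algebraMap A (Localization p.primeCompl) b * (d * ↑u⁻¹) := by rw [hcu]; ring
        have htc : ∀ t ∈ p, ∃ d : Localization p.primeCompl,
            algebraMap A (Localization p.primeCompl) (t * c) =
            algebraMap A (Localization p.primeCompl) b * d := by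
          intro t ht
          have hm1 : algebraMap A (Localization p.primeCompl) t * c' ∈
              Ideal.span {algebraMap A (Localization p.primeCompl) b} :=
            hc'ann _ (Ideal.mem_map_of_mem _ ht)
          obtain ⟨d, hd⟩ := Ideal.mem_span_singleton.mp hm1
          refine ⟨d * algebraMap A (Localization p.primeCompl) (s : A), ?_⟩
          have hm2 : algebraMap A (Localization p.primeCompl) (t * c) =
              (algebraMap A (Localization p.primeCompl) t * c') *
              algebraMap A (Localization p.primeCompl) (s : A) := by
            rw [map_mul, mul_assoc, hcs]
          rw [hm2, hd]; ring
        obtain ⟨T, hT⟩ := IsNoetherian.noetherian p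
        have hTc : ∀ t : A, ∃ vt ut : A, vt ∉ p ∧ (t ∈ T → t * c * vt = b * ut) := by
          intro t
          by_cases htT : t ∈ T
          · have htp : t ∈ p := by rw [← hT]; exact Submodule.subset_span htT
            obtain ⟨d, hd⟩ := htc t htp
            obtain ⟨⟨ut, vt⟩, huv⟩ := IsLocalization.surj p.primeCompl d
            refine ⟨vt, ut, vt.2, fun _ => ?_⟩
            apply hinj
            rw [map_mul, hd, mul_assoc, huv, ← map_mul]
          · exact ⟨1, 0, (Ideal.ne_top_iff_one p).mp hp.ne_top, fun h => absurd h htT⟩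
        choose v u hv he using hTc
        set V := ∏ t ∈ T, v t with hVdef
        have hV : V ∉ p := by
          refine Finset.prod_induction v (fun z => z ∉ p)
            (fun a' b' ha' hb' hab => ((hp.mem_or_mem hab).elim ha' hb'))
            ((Ideal.ne_top_iff_one p).mp hp.ne_top) (fun t _ => hv t)
        have hc1 : ∀ t ∈ p, t * (c * V) ∈ Ideal.span {b} := by
          have hcolon : p ≤ (Ideal.span {b}).colon (Ideal.span {c * V}) := by
            rw [← hT, Submodule.span_le]
            intro t ht
            rw [SetLike.mem_coe, Ideal.mem_colon_span_singleton, Ideal.mem_span_singleton]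
            refine ⟨u t * ∏ t' ∈ T.erase t, v t', ?_⟩
            have hVsplit : V = v t * ∏ t' ∈ T.erase t, v t' :=
              (Finset.mul_prod_erase T v ht).symm
            have het := he t ht
            rw [hVsplit]
            linear_combination (∏ t' ∈ T.erase t, v t') * het
          intro t ht
          have := hcolon ht
          rwa [Ideal.mem_colon_span_singleton] at this
        have hc1b : c * V ∉ Ideal.span {b} := by
          intro h
          apply hfc
          obtain ⟨w, hw⟩ := Ideal.mem_span_singleton.mp h
          obtain ⟨uu, huu⟩ : IsUnit (algebraMap A (Localization p.primeCompl) V) :=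
            IsLocalization.map_units _ (⟨V, hV⟩ : p.primeCompl)
          rw [Ideal.mem_span_singleton]
          refine ⟨algebraMap A (Localization p.primeCompl) w * ↑uu⁻¹, ?_⟩
          have h1 : algebraMap A (Localization p.primeCompl) c * ↑uu =
              algebraMap A (Localization p.primeCompl) b *
              algebraMap A (Localization p.primeCompl) w := by
            rw [huu, ← map_mul, ← map_mul]
            exact congrArg _ hw
          calc algebraMap A (Localization p.primeCompl) c
              = algebraMap A (Localization p.primeCompl) c * (↑uu * ↑uu⁻¹) := by
                rw [uu.mul_inv, mul_one]
            _ = (algebraMap A (Localization p.primeCompl) c * ↑uu) * ↑uu⁻¹ := by ring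
            _ = algebraMap A (Localization p.primeCompl) b *
                (algebraMap A (Localization p.primeCompl) w * ↑uu⁻¹) := by rw [h1]; ring
        have hb0' : b ∈ nonZeroDivisors A := mem_nonZeroDivisors_of_ne_zero hb0
        set x : FractionRing A := IsLocalization.mk' (FractionRing A) (c * V)
          (⟨b, hb0'⟩ : nonZeroDivisors A) with hxdef
        have hxb : x * algebraMap A (FractionRing A) b = algebraMap A (FractionRing A) (c * V) :=
          IsLocalization.mk'_spec (FractionRing A) (c * V) ⟨b, hb0'⟩
        have hKb : algebraMap A (FractionRing A) b ≠ 0 :=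
          fun h => hb0 (ginj (by rw [h, map_zero]))
        have hxA' : MemHtOneLoc A (FractionRing A) x := by
          intro q hq
          have hpq : ∃ s₀ ∈ p, s₀ ∉ q := by
            by_contra hcon
            push_neg at hcon
            exact hq.2.2 ⟨q1, q2, h1, h2, h12, lt_of_lt_of_le h2p (fun z hz => hcon z hz)⟩
          obtain ⟨s₀, hs₀p, hs₀q⟩ := hpq
          obtain ⟨w, hw⟩ := Ideal.mem_span_singleton.mp (hc1 s₀ hs₀p)
          refine ⟨w, s₀, hs₀q, ?_⟩
          apply mul_right_cancel₀ hKb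
          calc x * algebraMap A (FractionRing A) s₀ * algebraMap A (FractionRing A) b
              = (x * algebraMap A (FractionRing A) b) * algebraMap A (FractionRing A) s₀ := by
                ring
            _ = algebraMap A (FractionRing A) (c * V) * algebraMap A (FractionRing A) s₀ := by
                rw [hxb]
            _ = algebraMap A (FractionRing A) (s₀ * (c * V)) := by rw [← map_mul]; ring_nf
            _ = algebraMap A (FractionRing A) (b * w) := by rw [hw]
            _ = algebraMap A (FractionRing A) w * algebraMap A (FractionRing A) b := by
                rw [map_mul]; ring
        obtain ⟨a₀, ha₀⟩ := hA' x hxA'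
        apply hc1b
        rw [Ideal.mem_span_singleton]
        refine ⟨a₀, ?_⟩
        apply ginj
        calc algebraMap A (FractionRing A) (c * V)
            = x * algebraMap A (FractionRing A) b := hxb.symm
          _ = algebraMap A (FractionRing A) a₀ * algebraMap A (FractionRing A) b := by rw [ha₀]
          _ = algebraMap A (FractionRing A) (b * a₀) := by rw [← map_mul]; ring_nf
  · -- (S₂) → A' = A
    intro hS2 x hx
    by_contra hxA
    push_neg at hxA
    obtain ⟨⟨a, b⟩, hab⟩ := IsLocalization.surj (nonZeroDivisors A) x
    have hb0 : (b : A) ≠ 0 := nonZeroDivisors.ne_zero b.2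
    have hKb : algebraMap A (FractionRing A) (b : A) ≠ 0 :=
      fun h => hb0 (ginj (by rw [h, map_zero]))
    set J : Ideal A := Ideal.span {(b : A)} with hJ
    have haJ : a ∉ J := by
      intro h
      obtain ⟨w, hw⟩ := Ideal.mem_span_singleton.mp h
      apply hxA w
      apply mul_right_cancel₀ hKb
      rw [hab, hw, map_mul]
      ring
    have hane : Submodule.Quotient.mk (p := (J : Submodule A A)) a ≠ 0 :=
      fun h => haJ ((Submodule.Quotient.mk_eq_zero _).mp h)
    obtain ⟨P, hPass, hle⟩ := exists_le_isAssociatedPrime_of_isNoetherianRing A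
      (Submodule.Quotient.mk (p := (J : Submodule A A)) a) hane
    obtain ⟨hPp, z, hann⟩ := isAss_iff_ann.mp hPass
    obtain ⟨c, rfl⟩ := Submodule.Quotient.mk_surjective _ z
    have hmemP : ∀ t : A, t ∈ P ↔ t * c ∈ J := by
      intro t
      rw [hann, Submodule.mem_annihilator_span_singleton, ← Submodule.Quotient.mk_smul,
        smul_eq_mul, Submodule.Quotient.mk_eq_zero]
    have hcJ : c ∉ J := fun h =>
      (prime_ann_ne_zero hPp hann) ((Submodule.Quotient.mk_eq_zero _).mpr h)
    have hbP : (b : A) ∈ P :=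
      (hmemP _).mpr (Ideal.mem_span_singleton.mpr (dvd_mul_right _ _))
    have hPne : P ≠ ⊥ := fun h => hb0 (by rwa [h, Ideal.mem_bot] at hbP)
    have hbot : (⊥ : Ideal A) < P := bot_lt_iff_ne_bot.mpr hPne
    by_cases hht : ∃ q1 q2 : Ideal A, q1.IsPrime ∧ q2.IsPrime ∧ q1 < q2 ∧ q2 < P
    · haveI := hPp
      obtain ⟨r, hreg⟩ := (hS2 P hPp).2 hht
      have hinj : Function.Injective (algebraMap A (Localization P.primeCompl)) :=
        IsLocalization.injective _ P.primeCompl_le_nonZeroDivisors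
      have hfb0 : algebraMap A (Localization P.primeCompl) (b : A) ≠ 0 :=
        fun h => hb0 (hinj (by rw [h, map_zero]))
      refine regseq_contra (c := algebraMap A (Localization P.primeCompl) c) hreg hfb0 ?_ ?_
      · intro h
        obtain ⟨d, hd⟩ := Ideal.mem_span_singleton.mp h
        obtain ⟨⟨w, s⟩, hws⟩ := IsLocalization.surj P.primeCompl d
        have heq : algebraMap A (Localization P.primeCompl) (c * (s : A)) =
            algebraMap A (Localization P.primeCompl) ((b : A) * w) := by
          rw [map_mul, map_mul, hd, mul_assoc, hws]
        have hcs : c * (s : A) = (b : A) * w := hinj heq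
        have hsP : (s : A) ∈ P := by
          rw [hmemP, Ideal.mem_span_singleton]
          exact ⟨w, by linear_combination hcs⟩
        exact s.2 hsP
      · intro y hy
        have hcolon : Ideal.map (algebraMap A (Localization P.primeCompl)) P ≤
            (Ideal.span {algebraMap A (Localization P.primeCompl) (b : A)}).colon
            (Ideal.span {algebraMap A (Localization P.primeCompl) c}) := by
          rw [Ideal.map_le_iff_le_comap]
          intro t ht
          rw [Ideal.mem_comap, Ideal.mem_colon_span_singleton, ← map_mul]
          obtain ⟨w, hw⟩ := Ideal.mem_span_singleton.mp ((hmemP t).mp ht)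
          rw [Ideal.mem_span_singleton]
          exact ⟨algebraMap A (Localization P.primeCompl) w, by rw [hw, map_mul]⟩
        have h2 := hcolon hy
        rwa [Ideal.mem_colon_span_singleton] at h2
    · obtain ⟨a', s, hs, hxs⟩ := hx P ⟨hPp, ⟨⊥, Ideal.bot_prime, hbot⟩, hht⟩
      refine hs (hle ?_)
      have hsa : s * a = (b : A) * a' := by
        apply ginj
        rw [map_mul, map_mul]
        calc algebraMap A (FractionRing A) s * algebraMap A (FractionRing A) a
            = algebraMap A (FractionRing A) s * (x * algebraMap A (FractionRing A) (b : A)) := by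
              rw [hab]
          _ = (x * algebraMap A (FractionRing A) s) * algebraMap A (FractionRing A) (b : A) := by
              ring
          _ = algebraMap A (FractionRing A) a' * algebraMap A (FractionRing A) (b : A) := by
              rw [hxs]
          _ = algebraMap A (FractionRing A) (b : A) * algebraMap A (FractionRing A) a' := by
              ring
      rw [Submodule.mem_colon_singleton, Submodule.mem_bot, ← Submodule.Quotient.mk_smul, smul_eq_mul,
        Submodule.Quotient.mk_eq_zero]
      exact Ideal.mem_span_singleton.mpr ⟨a', hsa⟩
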